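/- Consider the (C[0,1])²-valued ODE system d/dt ρ₁(t,u) = -ψ(u)ρ₁(t,u) + ρ₀(t,u)∫₀¹λ(u,v)ρ₁(t,v)dv, d/dt ρ₀(t,u) = -ρ₀(t,u)∫₀¹λ(u,v)ρ₁(t,v)dv with initial conditions ρ₁(0,·) = φ and ρ₀(0,·) = 1 - φ where 0 ≤ φ(u) ≤ 1. Then any solution satisfies 0 ≤ ρ₀(t,u), ρ₁(t,u) and ρ₀(t,u) + ρ₁(t,u) ≤ 1 for all t ≥ 0 and u ∈ [0,1]. -/

import Mathlib

open MeasureTheory Real Set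

open Filter Topology

lemma aux_left_nonneg {f : ℝ → ℝ} {c : ℝ} (hc : 0 < c) (hf : ContinuousAt f c)
    (h : ∀ t ∈ Ico (0:ℝ) c, 0 ≤ f t) : 0 ≤ f c := by
  have htend : Tendsto f (𝓝[<] c) (𝓝 (f c)) :=
    (hf.continuousWithinAt (s := Iio c)).tendsto
  refine ge_of_tendsto htend ?_
  filter_upwards [Ioo_mem_nhdsLT_of_mem (⟨hc, le_refl c⟩ : c ∈ Ioc 0 c)] with t ht
  exact h t ⟨ht.1.le, ht.2⟩

lemma aux_left_deriv_nonpos {f : ℝ → ℝ} {c d : ℝ} (hc : 0 < c)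
    (hd : HasDerivAt f d c) (h0 : f c = 0)
    (hpos : ∀ t ∈ Ico (0:ℝ) c, 0 < f t) : d ≤ 0 := by
  have hs := hasDerivAt_iff_tendsto_slope.1 hd
  have hs' : Tendsto (slope f c) (𝓝[<] c) (𝓝 d) :=
    hs.mono_left (nhdsWithin_mono _ (fun x hx => ne_of_lt hx))
  refine le_of_tendsto hs' ?_
  filter_upwards [Ioo_mem_nhdsLT_of_mem (⟨hc, le_refl c⟩ : c ∈ Ioc 0 c)] with t ht
  have h1 : 0 < f t := hpos t ⟨ht.1.le, ht.2⟩
  have h2 : t - c < 0 := by linarith [ht.2]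
  rw [slope_def_field, h0]
  apply div_nonpos_of_nonneg_of_nonpos <;> linarith

/-- Any solution of the SIR hydrodynamic ODE system
`dρ₁/dt = -ψ(u)ρ₁ + ρ₀ ∫₀¹ λ(u,v)ρ₁(t,v) dv`, `dρ₀/dt = -ρ₀ ∫₀¹ λ(u,v)ρ₁(t,v) dv`
with `ρ₁(0,·) = φ`, `ρ₀(0,·) = 1 - φ`, `0 ≤ φ ≤ 1`, satisfies
`0 ≤ ρ₀, ρ₁` and `ρ₀ + ρ₁ ≤ 1` for all `t ≥ 0` and `u ∈ [0,1]`. -/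
theorem stmt_5 (ψ φ : ℝ → ℝ) (Λ : ℝ → ℝ → ℝ)
    (hψc : ContinuousOn ψ (Icc 0 1)) (hψpos : ∀ u ∈ Icc (0:ℝ) 1, 0 < ψ u)
    (hΛc : ContinuousOn (Function.uncurry Λ) (Icc 0 1 ×ˢ Icc 0 1))
    (hΛpos : ∀ u ∈ Icc (0:ℝ) 1, ∀ v ∈ Icc (0:ℝ) 1, 0 < Λ u v)
    (hφc : ContinuousOn φ (Icc 0 1))
    (hφ : ∀ u ∈ Icc (0:ℝ) 1, 0 ≤ φ u ∧ φ u ≤ 1)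
    (ρ₁ ρ₀ : ℝ → ℝ → ℝ)
    (hρ₁c : ContinuousOn (fun p : ℝ × ℝ => ρ₁ p.1 p.2) (Ici 0 ×ˢ Icc 0 1))
    (hρ₀c : ContinuousOn (fun p : ℝ × ℝ => ρ₀ p.1 p.2) (Ici 0 ×ˢ Icc 0 1))
    (hode₁ : ∀ u ∈ Icc (0:ℝ) 1, ∀ t : ℝ, 0 ≤ t →
      HasDerivAt (fun s => ρ₁ s u)
        (-ψ u * ρ₁ t u + ρ₀ t u * ∫ v in (0:ℝ)..1, Λ u v * ρ₁ t v) t)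
    (hode₀ : ∀ u ∈ Icc (0:ℝ) 1, ∀ t : ℝ, 0 ≤ t →
      HasDerivAt (fun s => ρ₀ s u)
        (-(ρ₀ t u) * ∫ v in (0:ℝ)..1, Λ u v * ρ₁ t v) t)
    (hinit₁ : ∀ u ∈ Icc (0:ℝ) 1, ρ₁ 0 u = φ u)
    (hinit₀ : ∀ u ∈ Icc (0:ℝ) 1, ρ₀ 0 u = 1 - φ u) :
    ∀ t : ℝ, 0 ≤ t → ∀ u ∈ Icc (0:ℝ) 1,
      0 ≤ ρ₀ t u ∧ 0 ≤ ρ₁ t u ∧ ρ₀ t u + ρ₁ t u ≤ 1 := by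
  -- continuity of time slices
  have hc₀ : ∀ u ∈ Icc (0:ℝ) 1, ContinuousOn (fun t => ρ₀ t u) (Ici 0) := by
    intro u hu
    exact hρ₀c.comp ((continuous_id.prodMk continuous_const).continuousOn)
      (fun t ht => ⟨ht, hu⟩)
  have hc₁ : ∀ u ∈ Icc (0:ℝ) 1, ContinuousOn (fun t => ρ₁ t u) (Ici 0) := by
    intro u hu
    exact hρ₁c.comp ((continuous_id.prodMk continuous_const).continuousOn)
      (fun t ht => ⟨ht, hu⟩)
  have hcA₀ : ∀ u ∈ Icc (0:ℝ) 1, ∀ t : ℝ, 0 < t → ContinuousAt (fun s => ρ₀ s u) t :=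
    fun u hu t ht => (hc₀ u hu).continuousAt (Ici_mem_nhds ht)
  have hcA₁ : ∀ u ∈ Icc (0:ℝ) 1, ∀ t : ℝ, 0 < t → ContinuousAt (fun s => ρ₁ s u) t :=
    fun u hu t ht => (hc₁ u hu).continuousAt (Ici_mem_nhds ht)
  -- Step 1: ρ₀ ≥ 0
  have h0 : ∀ t : ℝ, 0 ≤ t → ∀ u ∈ Icc (0:ℝ) 1, 0 ≤ ρ₀ t u := by
    intro t₀ ht₀ u hu
    by_contra hneg
    push_neg at hneg
    have ht₀pos : 0 < t₀ := by
      rcases ht₀.lt_or_eq with h | h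
      · exact h
      · exfalso; rw [← h, hinit₀ u hu] at hneg; linarith [(hφ u hu).2]
    -- bounds
    have hKc : IsCompact (Icc (0:ℝ) t₀ ×ˢ Icc (0:ℝ) 1) := isCompact_Icc.prod isCompact_Icc
    have hsub : Icc (0:ℝ) t₀ ×ˢ Icc (0:ℝ) 1 ⊆ Ici 0 ×ˢ Icc 0 1 :=
      prod_mono Icc_subset_Ici_self subset_rfl
    obtain ⟨M₁, hM₁⟩ := hKc.exists_bound_of_continuousOn (hρ₁c.mono hsub)
    obtain ⟨L, hL⟩ := (isCompact_Icc.prod isCompact_Icc).exists_bound_of_continuousOn hΛc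
    have hM₁0 : 0 ≤ M₁ := le_trans (norm_nonneg _)
      (hM₁ (0, 0) ⟨⟨le_refl _, ht₀⟩, ⟨le_refl _, zero_le_one⟩⟩)
    have hL0 : 0 ≤ L := le_trans (norm_nonneg _)
      (hL (0, 0) ⟨⟨le_refl _, zero_le_one⟩, ⟨le_refl _, zero_le_one⟩⟩)
    set K : ℝ := L * M₁ + 1 with hK
    set ε : ℝ := -ρ₀ t₀ u * Real.exp (-(K * t₀)) with hε
    have hεpos : 0 < ε := mul_pos (by linarith) (Real.exp_pos _)
    set g : ℝ → ℝ := fun t => ρ₀ t u + ε * Real.exp (K * t) with hg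
    have hgc : ContinuousOn g (Icc 0 t₀) :=
      ((hc₀ u hu).mono Icc_subset_Ici_self).add
        ((continuous_const.mul (Real.continuous_exp.comp (continuous_const.mul continuous_id))).continuousOn)
    set S : Set ℝ := Icc 0 t₀ ∩ g ⁻¹' Iic 0 with hS
    have hSclosed : IsClosed S :=
      hgc.preimage_isClosed_of_isClosed isClosed_Icc isClosed_Iic
    have ht₀S : t₀ ∈ S := by
      refine ⟨⟨ht₀, le_refl _⟩, ?_⟩
      simp only [mem_preimage, mem_Iic, hg, hε]
      rw [mul_assoc, ← Real.exp_add]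
      simp
    have hSbdd : BddBelow S := (bddBelow_Icc).mono inter_subset_left
    set c : ℝ := sInf S with hc
    have hcS : c ∈ S := hSclosed.csInf_mem ⟨t₀, ht₀S⟩ hSbdd
    have hcmem : c ∈ Icc (0:ℝ) t₀ := hcS.1
    have hcpos : 0 < c := by
      rcases hcmem.1.lt_or_eq with h | h
      · exact h
      · exfalso
        have := hcS.2
        simp only [mem_preimage, mem_Iic, hg] at this
        rw [← h] at this
        rw [hinit₀ u hu] at this
        simp at this
        nlinarith [(hφ u hu).2, Real.exp_pos (K * c), hεpos,
          mul_pos hεpos (Real.exp_pos (K * c))]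
    have hlt : ∀ t ∈ Ico (0:ℝ) c, 0 < g t := by
      intro t ht
      by_contra hcon
      push_neg at hcon
      have : t ∈ S := ⟨⟨ht.1, le_trans ht.2.le hcmem.2⟩, hcon⟩
      exact absurd this (notMem_of_lt_csInf ht.2 hSbdd)
    have hgc0 : g c = 0 := by
      refine le_antisymm hcS.2 ?_
      refine aux_left_nonneg hcpos ?_ (fun t ht => (hlt t ht).le)
      exact (hcA₀ u hu c hcpos).add ((continuous_const.mul (Real.continuous_exp.comp (continuous_const.mul continuous_id))).continuousAt)
    -- derivative of g at c
    have hd : HasDerivAt g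
        (-(ρ₀ c u) * (∫ v in (0:ℝ)..1, Λ u v * ρ₁ c v) + ε * (Real.exp (K * c) * K)) c := by
      refine (hode₀ u hu c hcpos.le).add ?_
      have h1 : HasDerivAt (fun t : ℝ => K * t) K c := by
        simpa using (hasDerivAt_id c).const_mul K
      exact ((Real.hasDerivAt_exp (K * c)).comp c h1).const_mul ε
    have hdle : (-(ρ₀ c u) * (∫ v in (0:ℝ)..1, Λ u v * ρ₁ c v) + ε * (Real.exp (K * c) * K)) ≤ 0 :=
      aux_left_deriv_nonpos hcpos hd hgc0 hlt
    -- bound on the integral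
    have hInt : ‖∫ v in (0:ℝ)..1, Λ u v * ρ₁ c v‖ ≤ L * M₁ := by
      have := intervalIntegral.norm_integral_le_of_norm_le_const (C := L * M₁)
        (f := fun v => Λ u v * ρ₁ c v) (a := 0) (b := 1) ?_
      · simpa using this
      · intro v hv
        rw [Set.uIoc_of_le (by norm_num : (0:ℝ) ≤ 1)] at hv
        have hv' : v ∈ Icc (0:ℝ) 1 := ⟨hv.1.le, hv.2⟩
        have hΛb := hL (u, v) ⟨hu, hv'⟩
        have hρb := hM₁ (c, v) ⟨hcmem, hv'⟩
        calc ‖Λ u v * ρ₁ c v‖ = ‖Λ u v‖ * ‖ρ₁ c v‖ := norm_mul _ _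
          _ ≤ L * M₁ := mul_le_mul hΛb hρb (norm_nonneg _) hL0
    have hρc : ρ₀ c u = -(ε * Real.exp (K * c)) := by
      have : ρ₀ c u + ε * Real.exp (K * c) = 0 := hgc0
      linarith
    have hE : 0 < ε * Real.exp (K * c) := mul_pos hεpos (Real.exp_pos _)
    have haux : -(L * M₁) ≤ ∫ v in (0:ℝ)..1, Λ u v * ρ₁ c v :=
      neg_le_of_abs_le (by simpa using hInt)
    rw [hρc] at hdle
    nlinarith [hE, mul_le_mul_of_nonneg_left haux hE.le]
  -- Step 2: ρ₁ ≥ 0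
  have h1 : ∀ t : ℝ, 0 ≤ t → ∀ u ∈ Icc (0:ℝ) 1, 0 ≤ ρ₁ t u := by
    intro t₀ ht₀ u₀ hu₀
    by_contra hneg
    push_neg at hneg
    have ht₀pos : 0 < t₀ := by
      rcases ht₀.lt_or_eq with h | h
      · exact h
      · exfalso; rw [← h, hinit₁ u₀ hu₀] at hneg; linarith [(hφ u₀ hu₀).1]
    have hKc : IsCompact (Icc (0:ℝ) t₀ ×ˢ Icc (0:ℝ) 1) := isCompact_Icc.prod isCompact_Icc
    have hsub : Icc (0:ℝ) t₀ ×ˢ Icc (0:ℝ) 1 ⊆ Ici 0 ×ˢ Icc 0 1 :=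
      prod_mono Icc_subset_Ici_self subset_rfl
    obtain ⟨M₀, hM₀⟩ := hKc.exists_bound_of_continuousOn (hρ₀c.mono hsub)
    obtain ⟨L, hL⟩ := (isCompact_Icc.prod isCompact_Icc).exists_bound_of_continuousOn hΛc
    have hM₀0 : 0 ≤ M₀ := le_trans (norm_nonneg _)
      (hM₀ (0, 0) ⟨⟨le_refl _, ht₀⟩, ⟨le_refl _, zero_le_one⟩⟩)
    have hL0 : 0 ≤ L := le_trans (norm_nonneg _)
      (hL (0, 0) ⟨⟨le_refl _, zero_le_one⟩, ⟨le_refl _, zero_le_one⟩⟩)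
    set K : ℝ := L * M₀ + 1 with hK
    set ε : ℝ := -ρ₁ t₀ u₀ * Real.exp (-(K * t₀)) with hε
    have hεpos : 0 < ε := mul_pos (by linarith) (Real.exp_pos _)
    set F : ℝ × ℝ → ℝ := fun p => ρ₁ p.1 p.2 + ε * Real.exp (K * p.1) with hF
    have hFc : ContinuousOn F (Icc 0 t₀ ×ˢ Icc 0 1) :=
      (hρ₁c.mono hsub).add ((continuous_const.mul (Real.continuous_exp.comp
        (continuous_const.mul continuous_fst))).continuousOn)
    set C : Set (ℝ × ℝ) := (Icc 0 t₀ ×ˢ Icc 0 1) ∩ F ⁻¹' Iic 0 with hC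
    have hCclosed : IsClosed C :=
      hFc.preimage_isClosed_of_isClosed (isClosed_Icc.prod isClosed_Icc) isClosed_Iic
    have hCcomp : IsCompact C :=
      IsCompact.of_isClosed_subset hKc hCclosed inter_subset_left
    set S : Set ℝ := Prod.fst '' C with hSdef
    have hScomp : IsCompact S := hCcomp.image continuous_fst
    have hne : (t₀, u₀) ∈ C := by
      refine ⟨⟨⟨ht₀, le_refl _⟩, hu₀⟩, ?_⟩
      simp only [mem_preimage, mem_Iic, hF, hε]
      rw [mul_assoc, ← Real.exp_add]
      simp
    have hSne : S.Nonempty := ⟨t₀, ⟨(t₀, u₀), hne, rfl⟩⟩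
    set c : ℝ := sInf S with hc
    have hcS : c ∈ S := hScomp.isClosed.csInf_mem hSne hScomp.bddBelow
    obtain ⟨p, hpC, hpc⟩ := hcS
    set w : ℝ := p.2 with hw
    have hwmem : w ∈ Icc (0:ℝ) 1 := hpC.1.2
    have hcmem : c ∈ Icc (0:ℝ) t₀ := by rw [← hpc]; exact hpC.1.1
    have hFle : ρ₁ c w + ε * Real.exp (K * c) ≤ 0 := by
      have := hpC.2
      simp only [mem_preimage, mem_Iic, hF] at this
      rw [hpc] at this
      exact this
    have hcpos : 0 < c := by
      rcases hcmem.1.lt_or_eq with h | h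
      · exact h
      · exfalso
        rw [← h] at hFle
        rw [hinit₁ w hwmem] at hFle
        simp at hFle
        nlinarith [(hφ w hwmem).1, Real.exp_pos (K * c), hεpos]
    have hlt : ∀ t ∈ Ico (0:ℝ) c, ∀ v ∈ Icc (0:ℝ) 1, 0 < ρ₁ t v + ε * Real.exp (K * t) := by
      intro t ht v hv
      by_contra hcon
      push_neg at hcon
      have htC : (t, v) ∈ C := ⟨⟨⟨ht.1, le_trans ht.2.le hcmem.2⟩, hv⟩, hcon⟩
      have htS : t ∈ S := ⟨(t, v), htC, rfl⟩
      have hlt' : t < sInf S := ht.2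
      exact absurd htS (notMem_of_lt_csInf (s := S) hlt' hScomp.bddBelow)
    have hall : ∀ v ∈ Icc (0:ℝ) 1, 0 ≤ ρ₁ c v + ε * Real.exp (K * c) := by
      intro v hv
      have hcont : ContinuousAt (fun t => ρ₁ t v + ε * Real.exp (K * t)) c :=
        (hcA₁ v hv c hcpos).add ((continuous_const.mul (Real.continuous_exp.comp
          (continuous_const.mul continuous_id))).continuousAt)
      have := aux_left_nonneg (f := fun t => ρ₁ t v + ε * Real.exp (K * t)) hcpos hcont
        (fun t ht => (hlt t ht v hv).le)
      simpa using this
    set g : ℝ → ℝ := fun t => ρ₁ t w + ε * Real.exp (K * t) with hg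
    have hgc0 : g c = 0 := le_antisymm hFle (hall w hwmem)
    have hd : HasDerivAt g
        ((-ψ w * ρ₁ c w + ρ₀ c w * ∫ v in (0:ℝ)..1, Λ w v * ρ₁ c v)
          + ε * (Real.exp (K * c) * K)) c := by
      refine (hode₁ w hwmem c hcpos.le).add ?_
      have h1 : HasDerivAt (fun t : ℝ => K * t) K c := by
        simpa using (hasDerivAt_id c).const_mul K
      exact ((Real.hasDerivAt_exp (K * c)).comp c h1).const_mul ε
    have hdle : ((-ψ w * ρ₁ c w + ρ₀ c w * ∫ v in (0:ℝ)..1, Λ w v * ρ₁ c v)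
          + ε * (Real.exp (K * c) * K)) ≤ 0 :=
      aux_left_deriv_nonpos hcpos hd hgc0 (fun t ht => hlt t ht w hwmem)
    set E : ℝ := ε * Real.exp (K * c) with hE
    have hEpos : 0 < E := mul_pos hεpos (Real.exp_pos _)
    -- lower bound on the integral
    have hIntLB : -(L * E) ≤ ∫ v in (0:ℝ)..1, Λ w v * ρ₁ c v := by
      have hcIci : (c : ℝ) ∈ Ici (0:ℝ) := hcpos.le
      have hΛw : ContinuousOn (fun v => Λ w v) (Icc 0 1) :=
        hΛc.comp ((continuous_const.prodMk continuous_id).continuousOn)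
          (fun v hv => ⟨hwmem, hv⟩)
      have hρw : ContinuousOn (fun v => ρ₁ c v) (Icc 0 1) :=
        hρ₁c.comp ((continuous_const.prodMk continuous_id).continuousOn)
          (fun v hv => ⟨hcIci, hv⟩)
      have hint : IntervalIntegrable (fun v => Λ w v * ρ₁ c v) volume 0 1 := by
        apply ContinuousOn.intervalIntegrable
        rw [uIcc_of_le (by norm_num : (0:ℝ) ≤ 1)]
        exact hΛw.mul hρw
      have hmono := intervalIntegral.integral_mono_on (by norm_num : (0:ℝ) ≤ 1)
        (intervalIntegrable_const (c := -(L * E))) hint ?_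
      · calc -(L * E) = (1 - 0) * (-(L * E)) := by ring
          _ = ∫ _ in (0:ℝ)..1, -(L * E) := by rw [intervalIntegral.integral_const]; simp
          _ ≤ _ := hmono
      · intro v hv
        have hp := hΛpos w hwmem v hv
        have hub : Λ w v ≤ L := le_trans (le_abs_self _) (hL (w, v) ⟨hwmem, hv⟩)
        have hρ : -E ≤ ρ₁ c v := by linarith [hall v hv]
        nlinarith [mul_nonneg hp.le (by linarith [hρ] : (0:ℝ) ≤ ρ₁ c v + E),
          mul_nonneg (by linarith : (0:ℝ) ≤ L - Λ w v) hEpos.le]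
    have hρ₁eq : ρ₁ c w = -E := by
      have : ρ₁ c w + E = 0 := hgc0
      linarith
    have hρ₀nn : 0 ≤ ρ₀ c w := h0 c hcpos.le w hwmem
    have hρ₀ub : ρ₀ c w ≤ M₀ := le_trans (le_abs_self _) (hM₀ (c, w) ⟨hcmem, hwmem⟩)
    have hψw := hψpos w hwmem
    rw [hρ₁eq] at hdle
    have hEK : ε * (Real.exp (K * c) * K) = L * M₀ * E + E := by rw [hE, hK]; ring
    rw [hEK] at hdle
    linarith [mul_pos hψw hEpos,
      mul_le_mul_of_nonneg_left hIntLB hρ₀nn,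
      mul_le_mul_of_nonneg_right hρ₀ub (by positivity : (0:ℝ) ≤ L * E)]
  -- Step 3: ρ₀ + ρ₁ ≤ 1
  have hsum : ∀ t : ℝ, 0 ≤ t → ∀ u ∈ Icc (0:ℝ) 1, ρ₀ t u + ρ₁ t u ≤ 1 := by
    intro T hT u hu
    set f : ℝ → ℝ := fun s => ρ₀ s u + ρ₁ s u with hf
    have hfc : ContinuousOn f (Icc 0 T) :=
      ((hc₀ u hu).add (hc₁ u hu)).mono Icc_subset_Ici_self
    have hder : ∀ x ∈ Ioo (0:ℝ) T, HasDerivAt f (-ψ u * ρ₁ x u) x := by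
      intro x hx
      have h := (hode₀ u hu x hx.1.le).add (hode₁ u hu x hx.1.le)
      refine h.congr_deriv ?_
      ring
    have hdiff : DifferentiableOn ℝ f (interior (Icc 0 T)) := by
      rw [interior_Icc]
      exact fun x hx => (hder x hx).differentiableAt.differentiableWithinAt
    have hderiv : ∀ x ∈ interior (Icc 0 T), deriv f x ≤ 0 := by
      rw [interior_Icc]
      intro x hx
      rw [(hder x hx).deriv]
      have := h1 x hx.1.le u hu
      nlinarith [hψpos u hu]
    have hanti : AntitoneOn f (Icc 0 T) :=
      antitoneOn_of_deriv_nonpos (convex_Icc 0 T) hfc hdiff hderiv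
    have hle : f T ≤ f 0 := hanti ⟨le_refl 0, hT⟩ ⟨hT, le_refl T⟩ hT
    have hf0 : f 0 = 1 := by
      simp only [hf]
      rw [hinit₀ u hu, hinit₁ u hu]
      ring
    simpa [hf0] using hle
  exact fun t ht u hu => ⟨h0 t ht u hu, h1 t ht u hu, hsum t ht u hu⟩
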